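/- arXiv:1101.3412 — 2 statements merged into one kernel-verified Lean document; each statement's English description precedes it below -/
import Mathlib

section
/- Let (Ω, μ) be a probability space, let x : Ω → ℝⁿ and g : Ω → ℝⁿ be square-integrable random vectors, and let θ ∈ ℝⁿ with E[x] = θ. Suppose the cross-product inequality holds: E[⟪x − θ, g⟫] ≥ E[‖g‖²] > 0. Then for every real a with 0 < a < 2, the shrinkage estimator x − a·g has strictly smaller risk than x, i.e. E[‖(x − a·g) − θ‖²] < E[‖x − θ‖²]. -/
open MeasureTheory
open scoped RealInnerProductSpace

/-- Shrinkage domination under the scalar quadratic loss: if the cross-product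
inequality `E⟪x - θ, g⟫ ≥ E‖g‖² > 0` holds, then for `0 < a < 2` the shrinkage
estimator `x - a • g` has strictly smaller risk than `x`. -/
theorem shrinkage_dominates_of_cross_product
    {Ω : Type*} [MeasurableSpace Ω] (μ : Measure Ω) [IsProbabilityMeasure μ]
    {n : ℕ} (x g : Ω → EuclideanSpace ℝ (Fin n)) (θ : EuclideanSpace ℝ (Fin n))
    (hx : MemLp x 2 μ) (hg : MemLp g 2 μ)
    (hmean : ∫ ω, x ω ∂μ = θ)
    (hcross : (∫ ω, ‖g ω‖ ^ 2 ∂μ) ≤ ∫ ω, ⟪x ω - θ, g ω⟫ ∂μ)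
    (hpos : 0 < ∫ ω, ‖g ω‖ ^ 2 ∂μ)
    (a : ℝ) (ha0 : 0 < a) (ha2 : a < 2) :
    (∫ ω, ‖(x ω - a • g ω) - θ‖ ^ 2 ∂μ) < ∫ ω, ‖x ω - θ‖ ^ 2 ∂μ := by
  set h : Ω → EuclideanSpace ℝ (Fin n) := fun ω => x ω - θ with hh_def
  have hh : MemLp h 2 μ := hx.sub (memLp_const θ)
  -- integrabilities
  have ih2 : Integrable (fun ω => ‖h ω‖ ^ 2) μ := hh.norm.integrable_sq
  have ig2 : Integrable (fun ω => ‖g ω‖ ^ 2) μ := hg.norm.integrable_sq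
  have iinner : Integrable (fun ω => ⟪h ω, g ω⟫) μ := by
    have := L2.integrable_inner (𝕜 := ℝ) (hh.toLp h) (hg.toLp g)
    refine this.congr ?_
    filter_upwards [hh.coeFn_toLp, hg.coeFn_toLp] with ω h1 h2
    rw [h1, h2]
  -- pointwise expansion
  have key : ∀ ω, ‖(x ω - a • g ω) - θ‖ ^ 2
      = ‖h ω‖ ^ 2 - (2 * a) * ⟪h ω, g ω⟫ + a ^ 2 * ‖g ω‖ ^ 2 := by
    intro ω
    have : (x ω - a • g ω) - θ = h ω - a • g ω := by
      simp [hh_def]; abel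
    rw [this, @norm_sub_sq_real, real_inner_smul_right, norm_smul]
    simp [mul_pow]
    ring
  have hint : (∫ ω, ‖(x ω - a • g ω) - θ‖ ^ 2 ∂μ)
      = (∫ ω, ‖h ω‖ ^ 2 ∂μ) - (2 * a) * (∫ ω, ⟪h ω, g ω⟫ ∂μ)
        + a ^ 2 * (∫ ω, ‖g ω‖ ^ 2 ∂μ) := by
    have iA : Integrable (fun ω => ‖h ω‖ ^ 2 - (2 * a) * ⟪h ω, g ω⟫) μ :=
      ih2.sub (iinner.const_mul _)
    have iB : Integrable (fun ω => a ^ 2 * ‖g ω‖ ^ 2) μ := ig2.const_mul _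
    have iC : Integrable (fun ω => (2 * a) * ⟪h ω, g ω⟫) μ := iinner.const_mul _
    simp_rw [key]
    rw [integral_add iA iB, integral_sub ih2 iC, integral_const_mul, integral_const_mul]
  have h1 : (2 * a) * (∫ ω, ‖g ω‖ ^ 2 ∂μ) ≤ (2 * a) * (∫ ω, ⟪h ω, g ω⟫ ∂μ) := by
    apply mul_le_mul_of_nonneg_left hcross (by linarith)
  rw [hint]
  simp only [hh_def] at h1 ⊢
  have h2 : a ^ 2 * (∫ ω, ‖g ω‖ ^ 2 ∂μ) < 2 * a * (∫ ω, ‖g ω‖ ^ 2 ∂μ) := by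
    nlinarith [mul_pos (mul_pos ha0 (show (0:ℝ) < 2 - a by linarith)) hpos]
  linarith [h1, h2]
end

section
/- (Main theorem: matrix-loss domination of the diagonal shrinkage estimator.) Let (Ω, μ) be a probability space and p ≥ 1. For each j = 1, …, p let x_j : Ω → ℝⁿ and g_j : Ω → ℝⁿ be square-integrable random vectors and θ_j ∈ ℝⁿ with E[x_j] = θ_j. Assume the pairs (x_1, g_1), …, (x_p, g_p) are jointly independent across j, and that for each j the cross-product inequality holds: E[⟪x_j − θ_j, g_j⟫] ≥ E[‖g_j‖²] > 0. Then for every real a with 0 < a < 2/p and every nonzero vector α ∈ ℝᵖ, E[‖Σ_{j=1}^p α_j ((x_j − a·g_j) − θ_j)‖²] < E[‖Σ_{j=1}^p α_j (x_j − θ_j)‖²]; that is, the diagonal shrinkage estimator whose j-th column is x_j − a·g_j strictly dominates the estimator with columns x_j under the p × p matrix quadratic loss (Θ̂ − Θ)ᵀ(Θ̂ − Θ), in the sense that the difference of the risk matrices is positive definite for all Θ. -/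
open MeasureTheory ProbabilityTheory
open scoped RealInnerProductSpace

lemma aux_integrable_inner {Ω : Type*} [MeasurableSpace Ω] {μ : Measure Ω}
    {E : Type*} [NormedAddCommGroup E] [InnerProductSpace ℝ E]
    {f g : Ω → E} (hf : MemLp f 2 μ) (hg : MemLp g 2 μ) :
    Integrable (fun ω => ⟪f ω, g ω⟫) μ := by
  have h := L2.integrable_inner (𝕜 := ℝ) (hf.toLp f) (hg.toLp g)
  refine h.congr ?_
  filter_upwards [hf.coeFn_toLp, hg.coeFn_toLp] with ω h1 h2
  rw [h1, h2]

/-- Main theorem: matrix-loss domination of the diagonal shrinkage estimator.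
If the columns `(x j, g j)` are jointly independent, `E[x j] = θ j`, and each
column satisfies the cross-product inequality `E⟪x j - θ j, g j⟫ ≥ E‖g j‖² > 0`,
then for `0 < a < 2/p` the diagonal shrinkage estimator with columns
`x j - a • g j` strictly dominates the one with columns `x j` under the
`p × p` matrix quadratic loss: for every nonzero `α : ℝᵖ`,
`E‖∑ j, α j ((x j - a • g j) - θ j)‖² < E‖∑ j, α j (x j - θ j)‖²`. -/
theorem diagonal_shrinkage_dominates_matrix_loss
    {Ω : Type*} [MeasurableSpace Ω] (μ : Measure Ω) [IsProbabilityMeasure μ]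
    {n p : ℕ} (hp : 1 ≤ p)
    (x g : Fin p → Ω → EuclideanSpace ℝ (Fin n))
    (θ : Fin p → EuclideanSpace ℝ (Fin n))
    (hx : ∀ j, MemLp (x j) 2 μ) (hg : ∀ j, MemLp (g j) 2 μ)
    (hmean : ∀ j, ∫ ω, x j ω ∂μ = θ j)
    (hindep : iIndepFun (fun j ω => (x j ω, g j ω)) μ)
    (hcross : ∀ j, (∫ ω, ‖g j ω‖ ^ 2 ∂μ) ≤ ∫ ω, ⟪x j ω - θ j, g j ω⟫ ∂μ)
    (hpos : ∀ j, 0 < ∫ ω, ‖g j ω‖ ^ 2 ∂μ)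
    (a : ℝ) (ha0 : 0 < a) (ha2 : a < 2 / p)
    (α : Fin p → ℝ) (hα : α ≠ 0) :
    (∫ ω, ‖∑ j, α j • ((x j ω - a • g j ω) - θ j)‖ ^ 2 ∂μ) <
      ∫ ω, ‖∑ j, α j • (x j ω - θ j)‖ ^ 2 ∂μ := by
  have hp' : (0:ℝ) < p := by exact_mod_cast hp
  have hap : a * p < 2 := (lt_div_iff₀ hp').mp ha2
  -- basic objects
  set S : Ω → EuclideanSpace ℝ (Fin n) := fun ω => ∑ j, α j • (x j ω - θ j) with hSdef
  set G : Ω → EuclideanSpace ℝ (Fin n) := fun ω => ∑ j, α j • g j ω with hGdef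
  have hY : ∀ j, MemLp (fun ω => x j ω - θ j) 2 μ :=
    fun j => (hx j).sub (memLp_const _)
  have hS : MemLp S 2 μ := by
    rw [hSdef]
    exact memLp_finset_sum _ (fun j _ => (hY j).const_smul (α j))
  have hG : MemLp G 2 μ := by
    rw [hGdef]
    exact memLp_finset_sum _ (fun j _ => (hg j).const_smul (α j))
  have hSsq : Integrable (fun ω => ‖S ω‖ ^ 2) μ := hS.norm.integrable_sq
  have hGsq : Integrable (fun ω => ‖G ω‖ ^ 2) μ := hG.norm.integrable_sq
  have hSG : Integrable (fun ω => ⟪S ω, G ω⟫) μ := aux_integrable_inner hS hG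
  have hinner_int : ∀ j k, Integrable (fun ω => ⟪x j ω - θ j, g k ω⟫) μ :=
    fun j k => aux_integrable_inner (hY j) (hg k)
  -- cross terms vanish
  have hcross0 : ∀ j k, j ≠ k → (∫ ω, ⟪x j ω - θ j, g k ω⟫ ∂μ) = 0 := by
    intro j k hjk
    have hpair := hindep.indepFun hjk
    have hxint : Integrable (x j) μ := (hx j).integrable one_le_two
    have coord : ∀ i : Fin n, (∫ ω, (x j ω i - θ j i) * g k ω i ∂μ) = 0 := by
      intro i
      have hxi0 : (∫ ω, (x j ω i - θ j i) ∂μ) = 0 := by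
        have hxii : Integrable (fun ω => x j ω i) μ := by
          exact (EuclideanSpace.proj (𝕜 := ℝ) i).integrable_comp hxint
        have hxmean : (∫ ω, x j ω i ∂μ) = θ j i := by
          have h := (EuclideanSpace.proj (𝕜 := ℝ) i).integral_comp_comm hxint
          rw [hmean j] at h
          exact h
        rw [integral_sub hxii (integrable_const _), integral_const, hxmean]
        simp
      have hind_i : IndepFun (fun ω => x j ω i - θ j i) (fun ω => g k ω i) μ := by
        have hφ : Measurable (fun q : (EuclideanSpace ℝ (Fin n)) × (EuclideanSpace ℝ (Fin n)) =>
            q.1 i - θ j i) :=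
          ((EuclideanSpace.proj (𝕜 := ℝ) i).measurable.comp measurable_fst).sub measurable_const
        have hψ : Measurable (fun q : (EuclideanSpace ℝ (Fin n)) × (EuclideanSpace ℝ (Fin n)) =>
            q.2 i) :=
          (EuclideanSpace.proj (𝕜 := ℝ) i).measurable.comp measurable_snd
        exact hpair.comp hφ hψ
      have hm1 : AEStronglyMeasurable (fun ω => x j ω i - θ j i) μ :=
        (((EuclideanSpace.proj (𝕜 := ℝ) i).continuous.comp_aestronglyMeasurable
          (hx j).aestronglyMeasurable).sub aestronglyMeasurable_const)
      have hm2 : AEStronglyMeasurable (fun ω => g k ω i) μ :=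
        (EuclideanSpace.proj (𝕜 := ℝ) i).continuous.comp_aestronglyMeasurable
          (hg k).aestronglyMeasurable
      have := hind_i.integral_fun_mul_eq_mul_integral hm1 hm2
      calc (∫ ω, (x j ω i - θ j i) * g k ω i ∂μ)
          = (∫ ω, (x j ω i - θ j i) ∂μ) * ∫ ω, g k ω i ∂μ := this
        _ = 0 := by rw [hxi0, zero_mul]
    have hinner_pt : ∀ ω, ⟪x j ω - θ j, g k ω⟫ = ∑ i, (x j ω i - θ j i) * g k ω i := by
      intro ω
      simp [PiLp.inner_apply, RCLike.inner_apply, conj_trivial, PiLp.sub_apply, mul_comm]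
    have hprod_int : ∀ i : Fin n, Integrable (fun ω => (x j ω i - θ j i) * g k ω i) μ := by
      intro i
      have h1 : MemLp (fun ω => x j ω i - θ j i) 2 μ :=
        ((EuclideanSpace.proj (𝕜 := ℝ) i).comp_memLp' (hx j)).sub (memLp_const _)
      have h2 : MemLp (fun ω => g k ω i) 2 μ :=
        (EuclideanSpace.proj (𝕜 := ℝ) i).comp_memLp' (hg k)
      have := aux_integrable_inner h1 h2
      refine this.congr (Filter.Eventually.of_forall fun ω => ?_)
      simp [RCLike.inner_apply, conj_trivial, mul_comm]
    rw [integral_congr_ae (Filter.Eventually.of_forall hinner_pt),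
      integral_finset_sum _ (fun i _ => hprod_int i)]
    exact Finset.sum_eq_zero fun i _ => coord i
  -- expansion of E⟪S,G⟫ into a double sum
  have hSG_eq : (∫ ω, ⟪S ω, G ω⟫ ∂μ)
      = ∑ j, ∑ k, (α j * α k) * ∫ ω, ⟪x j ω - θ j, g k ω⟫ ∂μ := by
    have hpt : ∀ ω, ⟪S ω, G ω⟫ = ∑ j, ∑ k, (α j * α k) * ⟪x j ω - θ j, g k ω⟫ := by
      intro ω
      rw [hSdef, hGdef]
      simp only [sum_inner, inner_sum, real_inner_smul_left, real_inner_smul_right]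
      rw [Finset.sum_comm]
      exact Finset.sum_congr rfl fun j _ => Finset.sum_congr rfl fun k _ => by ring
    rw [integral_congr_ae (Filter.Eventually.of_forall hpt),
      integral_finset_sum _ (fun j _ => integrable_finset_sum _
        fun k _ => ((hinner_int j k).const_mul _))]
    refine Finset.sum_congr rfl fun j _ => ?_
    rw [integral_finset_sum _ fun k _ => (hinner_int j k).const_mul _]
    exact Finset.sum_congr rfl fun k _ => integral_const_mul _ _
  set T : ℝ := ∑ j, (α j) ^ 2 * ∫ ω, ‖g j ω‖ ^ 2 ∂μ with hTdef
  have hT : 0 < T := by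
    obtain ⟨j0, hj0⟩ : ∃ j, α j ≠ 0 := by
      by_contra h
      push_neg at h
      exact hα (funext h)
    refine Finset.sum_pos' (fun j _ => mul_nonneg (sq_nonneg _) (hpos j).le)
      ⟨j0, Finset.mem_univ _, mul_pos (pow_two_pos_of_ne_zero hj0) (hpos j0)⟩
  have hSG_ge : T ≤ ∫ ω, ⟪S ω, G ω⟫ ∂μ := by
    rw [hSG_eq]
    have hdiag : ∀ j : Fin p,
        (∑ k, (α j * α k) * ∫ ω, ⟪x j ω - θ j, g k ω⟫ ∂μ)
          = (α j) ^ 2 * ∫ ω, ⟪x j ω - θ j, g j ω⟫ ∂μ := by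
      intro j
      rw [Finset.sum_eq_single j (fun k _ hkj => by rw [hcross0 j k (Ne.symm hkj), mul_zero])
        (fun h => absurd (Finset.mem_univ j) h)]
      ring
    rw [hTdef]
    calc (∑ j, (α j) ^ 2 * ∫ ω, ‖g j ω‖ ^ 2 ∂μ)
        ≤ ∑ j, (α j) ^ 2 * ∫ ω, ⟪x j ω - θ j, g j ω⟫ ∂μ :=
          Finset.sum_le_sum fun j _ => mul_le_mul_of_nonneg_left (hcross j) (sq_nonneg _)
      _ = ∑ j, ∑ k, (α j * α k) * ∫ ω, ⟪x j ω - θ j, g k ω⟫ ∂μ :=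
          (Finset.sum_congr rfl fun j _ => (hdiag j).symm)
  -- upper bound on E‖G‖²
  have hG_le : (∫ ω, ‖G ω‖ ^ 2 ∂μ) ≤ p * T := by
    have hbound : ∀ ω, ‖G ω‖ ^ 2 ≤ (p : ℝ) * ∑ j, (α j) ^ 2 * ‖g j ω‖ ^ 2 := by
      intro ω
      have h1 : ‖G ω‖ ≤ ∑ j, ‖α j • g j ω‖ := by
        rw [hGdef]; exact norm_sum_le _ _
      have h2 : ‖G ω‖ ^ 2 ≤ (∑ j, ‖α j • g j ω‖) ^ 2 :=
        pow_le_pow_left₀ (norm_nonneg _) h1 2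
      have h3 : (∑ j, ‖α j • g j ω‖) ^ 2
          ≤ ((Finset.univ : Finset (Fin p)).card : ℝ) * ∑ j, ‖α j • g j ω‖ ^ 2 := by
        exact sq_sum_le_card_mul_sum_sq (s := Finset.univ) (f := fun j => ‖α j • g j ω‖)
      have h4 : (∑ j, ‖α j • g j ω‖ ^ 2) = ∑ j, (α j) ^ 2 * ‖g j ω‖ ^ 2 := by
        refine Finset.sum_congr rfl fun j _ => ?_
        rw [norm_smul, mul_pow, Real.norm_eq_abs, sq_abs]
      simp only [Finset.card_univ, Fintype.card_fin] at h3
      calc ‖G ω‖ ^ 2 ≤ (∑ j, ‖α j • g j ω‖) ^ 2 := h2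
        _ ≤ (p : ℝ) * ∑ j, ‖α j • g j ω‖ ^ 2 := h3
        _ = (p : ℝ) * ∑ j, (α j) ^ 2 * ‖g j ω‖ ^ 2 := by rw [h4]
    have hint : Integrable (fun ω => (p : ℝ) * ∑ j, (α j) ^ 2 * ‖g j ω‖ ^ 2) μ :=
      (integrable_finset_sum _ fun j _ => ((hg j).norm.integrable_sq).const_mul _).const_mul _
    calc (∫ ω, ‖G ω‖ ^ 2 ∂μ)
        ≤ ∫ ω, (p : ℝ) * ∑ j, (α j) ^ 2 * ‖g j ω‖ ^ 2 ∂μ :=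
          integral_mono hGsq hint hbound
      _ = p * T := by
          rw [integral_const_mul, integral_finset_sum _
            fun j _ => ((hg j).norm.integrable_sq).const_mul _, hTdef]
          congr 1
          exact Finset.sum_congr rfl fun j _ => integral_const_mul _ _
  -- rewrite the goal
  have e1v : ∀ ω, (∑ j, α j • ((x j ω - a • g j ω) - θ j)) = S ω - a • G ω := by
    intro ω
    rw [hSdef, hGdef]
    simp only [Finset.smul_sum, ← Finset.sum_sub_distrib]
    refine Finset.sum_congr rfl fun j _ => ?_
    module
  have e1 : ∀ ω, ‖∑ j, α j • ((x j ω - a • g j ω) - θ j)‖ ^ 2 = ‖S ω - a • G ω‖ ^ 2 :=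
    fun ω => by rw [e1v ω]
  have e2 : ∀ ω, ‖∑ j, α j • (x j ω - θ j)‖ ^ 2 = ‖S ω‖ ^ 2 := fun ω => by rw [hSdef]
  rw [show (∫ ω, ‖∑ j, α j • ((x j ω - a • g j ω) - θ j)‖ ^ 2 ∂μ)
        = ∫ ω, ‖S ω - a • G ω‖ ^ 2 ∂μ from
      integral_congr_ae (Filter.Eventually.of_forall e1),
    show (∫ ω, ‖∑ j, α j • (x j ω - θ j)‖ ^ 2 ∂μ) = ∫ ω, ‖S ω‖ ^ 2 ∂μ from
      integral_congr_ae (Filter.Eventually.of_forall e2)]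
  -- expand the quadratic
  have hIL : (∫ ω, ‖S ω - a • G ω‖ ^ 2 ∂μ)
      = (∫ ω, ‖S ω‖ ^ 2 ∂μ) - (2 * a) * (∫ ω, ⟪S ω, G ω⟫ ∂μ)
        + a ^ 2 * ∫ ω, ‖G ω‖ ^ 2 ∂μ := by
    have expand : ∀ ω, ‖S ω - a • G ω‖ ^ 2
        = ‖S ω‖ ^ 2 - (2 * a) * ⟪S ω, G ω⟫ + a ^ 2 * ‖G ω‖ ^ 2 := by
      intro ω
      rw [norm_sub_sq_real, real_inner_smul_right, norm_smul, Real.norm_eq_abs, mul_pow, sq_abs]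
      ring
    have hi3 : Integrable (fun ω => (2 * a) * ⟪S ω, G ω⟫) μ := hSG.const_mul _
    have hi1 : Integrable (fun ω => ‖S ω‖ ^ 2 - (2 * a) * ⟪S ω, G ω⟫) μ := hSsq.sub hi3
    have hi2 : Integrable (fun ω => a ^ 2 * ‖G ω‖ ^ 2) μ := hGsq.const_mul _
    rw [integral_congr_ae (Filter.Eventually.of_forall expand),
      integral_add hi1 hi2, integral_sub hSsq hi3, integral_const_mul, integral_const_mul]
  rw [hIL]
  nlinarith [mul_le_mul_of_nonneg_left hG_le (sq_nonneg a), mul_pos ha0 hT,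
    mul_le_mul_of_nonneg_left hSG_ge (by linarith : (0:ℝ) ≤ 2 * a)]
end
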